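/- Let S be a sequence over F_q with generating function G(x), and let N ≥ 2 with G(x) ≢ 0 mod x^N. Then E_N(S) ≤ N − L_N(S) + 2, where L_N(S) is the N-th linear complexity. -/

import Mathlib

/-- The `N`-th linear complexity of a sequence `s` over a field: the length of a
shortest linear recurrence satisfied by the first `N` terms. -/
noncomputable def linComplexityN {F : Type*} [Field F] (s : ℕ → F) (N : ℕ) : ℕ :=
  sInf {L | ∃ c : Fin L → F, ∀ i, i + L < N →
    s (i + L) + ∑ ℓ : Fin L, c ℓ * s (i + ℓ.1) = 0}

open Classical in
/-- The `N`-th expansion complexity of a sequence `s` over a field: `0` if the first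
`N` terms vanish, otherwise the least total degree of a nonzero bivariate polynomial
`h(x,y)` with `h(x, G(x)) ≡ 0 mod x^N`, where `G` is the generating function of `s`. -/
noncomputable def expComplexityN {F : Type*} [Field F] (s : ℕ → F) (N : ℕ) : ℕ :=
  if ∀ i < N, s i = 0 then 0 else
  sInf {d | ∃ h : MvPolynomial (Fin 2) F, h ≠ 0 ∧ h.totalDegree = d ∧
    (PowerSeries.X : PowerSeries F) ^ N ∣
      MvPolynomial.aeval ![(PowerSeries.X : PowerSeries F), PowerSeries.mk s] h}

theorem expComplexityN_le_sub_linComplexityN {F : Type*} [Field F] [Fintype F]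
    (s : ℕ → F) (N : ℕ) (hN : 2 ≤ N)
    (hG : ¬ (PowerSeries.X : PowerSeries F) ^ N ∣ PowerSeries.mk s) :
    expComplexityN s N ≤ N - linComplexityN s N + 2 := by
  classical
  set Sc : Set ℕ := {L | ∃ c : Fin L → F, ∀ i, i + L < N →
    s (i + L) + ∑ ℓ : Fin L, c ℓ * s (i + ℓ.1) = 0} with hSc
  have hLdef : linComplexityN s N = sInf Sc := rfl
  have hNmem : N ∈ Sc := ⟨fun _ => 0, fun i hi => absurd hi (by omega)⟩
  set L := linComplexityN s N with hLd
  have hLN : L ≤ N := Nat.sInf_le hNmem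
  have hGex : ∃ i, i < N ∧ s i ≠ 0 := by
    by_contra hc
    push_neg at hc
    exact hG ((PowerSeries.X_pow_dvd_iff).mpr (fun m hm => by simpa using hc m hm))
  have hLmem : L ∈ Sc := Nat.sInf_mem ⟨N, hNmem⟩
  have hL1 : 1 ≤ L := by
    rcases Nat.eq_zero_or_pos L with h0 | h
    · exfalso
      obtain ⟨c, hc⟩ := hLmem
      obtain ⟨i, hi, hsi⟩ := hGex
      have h2 := hc i (by omega)
      have : IsEmpty (Fin L) := by rw [h0]; infer_instance
      rw [Finset.univ_eq_empty, Finset.sum_empty, add_zero, h0, add_zero] at h2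
      exact hsi h2
    · exact h
  set t := N - L with htd
  have hNt : N = t + L := by omega
  -- windows and the target vector
  set w : Fin (t+1) → (Fin L → F) := fun i c => s (i.1 + c.1) with hw
  set B : ℕ → (Fin L → F) := fun m j => if j.1 = m then 1 else 0 with hB
  have hespan : B (L-1) ∈ Submodule.span F (Set.range w) := by
    by_contra hes
    obtain ⟨f, hfe, hfmap⟩ := Submodule.exists_dual_map_eq_bot_of_notMem hes inferInstance
    have hfw : ∀ i, f (w i) = 0 := by
      intro i
      have hm : f (w i) ∈ Submodule.map f (Submodule.span F (Set.range w)) :=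
        ⟨w i, Submodule.subset_span ⟨i, rfl⟩, rfl⟩
      rw [hfmap] at hm
      exact (Submodule.mem_bot F).mp hm
    have hnot : L - 1 ∉ Sc := by
      have hlt : L - 1 < sInf Sc := by rw [← hLdef]; omega
      exact Nat.notMem_of_lt_sInf hlt
    apply hnot
    set g := (f (B (L-1)))⁻¹ • f with hg
    have hge : g (B (L-1)) = 1 := by simp [hg, inv_mul_cancel₀ hfe]
    have hgw : ∀ i, g (w i) = 0 := fun i => by simp [hg, hfw i]
    refine ⟨fun j => g (B j.1), fun i hi => ?_⟩
    have hit : i < t + 1 := by omega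
    have h0 := hgw ⟨i, hit⟩
    rw [LinearMap.pi_apply_eq_sum_univ] at h0
    have hbasis : ∀ c : Fin L, (fun j : Fin L => if c = j then (1:F) else 0) = B c.1 := by
      intro c
      funext j
      simp [hB, Fin.ext_iff, eq_comm]
    simp only [hbasis] at h0
    have hwv : ∀ c : Fin L, w ⟨i, hit⟩ c = s (i + c.1) := fun c => rfl
    simp only [hwv] at h0
    rw [Fin.sum_univ_eq_sum_range (fun m => s (i + m) • g (B m)) L] at h0
    have h0' : ∑ m ∈ Finset.range ((L-1)+1), s (i + m) • g (B m) = 0 := by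
      rw [show (L-1)+1 = L from by omega]; exact h0
    rw [Finset.sum_range_succ, hge] at h0'
    rw [Fin.sum_univ_eq_sum_range (fun m => g (B m) * s (i + m)) (L-1)]
    have hT : ∑ m ∈ Finset.range (L-1), g (B m) * s (i + m)
        = ∑ m ∈ Finset.range (L-1), s (i + m) • g (B m) :=
      Finset.sum_congr rfl fun m _ => by rw [smul_eq_mul, mul_comm]
    rw [hT]
    rw [smul_eq_mul, mul_one] at h0'
    linear_combination h0'
  obtain ⟨α, hα⟩ := (Submodule.mem_span_range_iff_exists_fun F).mp hespan
  have hαc : ∀ m : ℕ, m < L →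
      (∑ i : Fin (t+1), α i * s (i.1 + m)) = if m = L - 1 then 1 else 0 := by
    intro m hm
    have h1 := congrFun hα ⟨m, hm⟩
    simp only [Finset.sum_apply, Pi.smul_apply, smul_eq_mul, hw, hB] at h1
    simpa using h1
  have hex : ∃ i₀ : Fin (t+1), α i₀ ≠ 0 := by
    by_contra hc
    push_neg at hc
    have h1 := hαc (L-1) (by omega)
    rw [if_pos rfl] at h1
    simp [hc] at h1
  obtain ⟨i₀, hi₀⟩ := hex
  -- the power series u(x) * G(x)
  set A : PowerSeries F :=
    (∑ i : Fin (t+1), PowerSeries.C (α i) * PowerSeries.X ^ (t+1-i.1)) * PowerSeries.mk s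
    with hA
  have hcoeffA : ∀ m : ℕ, PowerSeries.coeff m A
      = ∑ i : Fin (t+1), α i * (if t+1-i.1 ≤ m then s (m - (t+1-i.1)) else 0) := by
    intro m
    rw [hA, Finset.sum_mul, map_sum]
    refine Finset.sum_congr rfl fun i _ => ?_
    rw [mul_assoc, PowerSeries.coeff_C_mul, PowerSeries.coeff_X_pow_mul']
    simp
  have hA0 : ∀ m : ℕ, t+3 ≤ m → m < N → PowerSeries.coeff m A = 0 := by
    intro m h3 hmN
    rw [hcoeffA]
    have hterm : ∀ i : Fin (t+1), α i * (if t+1-i.1 ≤ m then s (m - (t+1-i.1)) else 0)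
        = α i * s (i.1 + (m - t - 1)) := by
      intro i
      have hi2 := i.2
      rw [if_pos (by omega)]
      congr 2
      omega
    rw [Finset.sum_congr rfl (fun i _ => hterm i), hαc (m - t - 1) (by omega), if_neg (by omega)]
  -- the bivariate polynomial
  set hU : MvPolynomial (Fin 2) F :=
    ∑ i : Fin (t+1), MvPolynomial.C (α i) * (MvPolynomial.X 0) ^ (t+1-i.1) with hhU
  set hV : MvPolynomial (Fin 2) F :=
    ∑ m ∈ Finset.range (t+3),
      MvPolynomial.C (PowerSeries.coeff m A) * (MvPolynomial.X 0) ^ m with hhV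
  set h : MvPolynomial (Fin 2) F := hU * MvPolynomial.X 1 - hV with hh
  have haeval : MvPolynomial.aeval ![(PowerSeries.X : PowerSeries F), PowerSeries.mk s] h
      = A - ∑ m ∈ Finset.range (t+3),
          PowerSeries.C (PowerSeries.coeff m A) * PowerSeries.X ^ m := by
    rw [hh, map_sub, map_mul, hhU, hhV, map_sum, map_sum, hA]
    simp [MvPolynomial.aeval_X, PowerSeries.algebraMap_apply]
  have hdvd : (PowerSeries.X : PowerSeries F) ^ N ∣
      MvPolynomial.aeval ![(PowerSeries.X : PowerSeries F), PowerSeries.mk s] h := by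
    rw [haeval, PowerSeries.X_pow_dvd_iff]
    intro m hm
    rw [map_sub, map_sum]
    have hsum : ∑ m' ∈ Finset.range (t+3), PowerSeries.coeff m
          (PowerSeries.C (PowerSeries.coeff m' A) * PowerSeries.X ^ m')
        = if m < t+3 then PowerSeries.coeff m A else 0 := by
      rw [Finset.sum_congr rfl (fun m' _ => by
        rw [PowerSeries.coeff_C_mul, PowerSeries.coeff_X_pow, mul_ite, mul_one, mul_zero])]
      rw [Finset.sum_ite_eq (Finset.range (t+3)) m (fun m' => PowerSeries.coeff m' A)]
      simp [Finset.mem_range]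
    rw [hsum]
    by_cases hc : m < t + 3
    · rw [if_pos hc, sub_self]
    · rw [if_neg hc, sub_zero]
      exact hA0 m (by omega) hm
  have hne : h ≠ 0 := by
    intro h0
    have hd1 : ((Finsupp.single (0 : Fin 2) (t+1-i₀.1) + Finsupp.single (1 : Fin 2) 1 :
        Fin 2 →₀ ℕ)) 1 = 1 := by
      rw [Finsupp.add_apply, Finsupp.single_apply, Finsupp.single_apply]
      norm_num
    have hkey : MvPolynomial.coeff
        (Finsupp.single (0 : Fin 2) (t+1-i₀.1) + Finsupp.single (1 : Fin 2) 1) h = α i₀ := by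
      rw [hh, MvPolynomial.coeff_sub, MvPolynomial.coeff_mul_X']
      rw [if_pos (by simp [Finsupp.mem_support_iff, hd1])]
      rw [add_tsub_cancel_right]
      have hVc : MvPolynomial.coeff
          (Finsupp.single (0 : Fin 2) (t+1-i₀.1) + Finsupp.single (1 : Fin 2) 1) hV = 0 := by
        rw [hhV]
        rw [MvPolynomial.coeff_sum]
        refine Finset.sum_eq_zero fun m _ => ?_
        rw [MvPolynomial.coeff_C_mul, MvPolynomial.coeff_X_pow]
        rw [if_neg, mul_zero]
        intro hcon
        have h2 : (Finsupp.single (0:Fin 2) m) 1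
            = ((Finsupp.single (0 : Fin 2) (t+1-i₀.1) + Finsupp.single (1 : Fin 2) 1 :
              Fin 2 →₀ ℕ)) 1 := by rw [hcon]
        rw [hd1, Finsupp.single_apply] at h2
        norm_num at h2
      rw [hVc, sub_zero, hhU, MvPolynomial.coeff_sum]
      rw [Finset.sum_eq_single i₀]
      · rw [MvPolynomial.coeff_C_mul, MvPolynomial.coeff_X_pow, if_pos rfl, mul_one]
      · intro i _ hne
        rw [MvPolynomial.coeff_C_mul, MvPolynomial.coeff_X_pow, if_neg, mul_zero]
        intro hcon
        have h2 : (Finsupp.single (0:Fin 2) (t+1-i.1)) 0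
            = (Finsupp.single (0:Fin 2) (t+1-i₀.1)) 0 := by rw [hcon]
        rw [Finsupp.single_apply, Finsupp.single_apply, if_pos rfl, if_pos rfl] at h2
        have hi2 := i.2
        have hi02 := i₀.2
        exact hne (Fin.ext (by omega))
      · intro hni
        exact absurd (Finset.mem_univ i₀) hni
    rw [h0, MvPolynomial.coeff_zero] at hkey
    exact hi₀ hkey.symm
  have hdeg : h.totalDegree ≤ t + 2 := by
    rw [hh, sub_eq_add_neg]
    refine le_trans (MvPolynomial.totalDegree_add _ _) (max_le ?_ ?_)
    · refine le_trans (MvPolynomial.totalDegree_mul _ _) ?_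
      have h1 : hU.totalDegree ≤ t + 1 := by
        rw [hhU]
        refine le_trans (MvPolynomial.totalDegree_finset_sum _ _) (Finset.sup_le fun i _ => ?_)
        refine le_trans (MvPolynomial.totalDegree_mul _ _) ?_
        rw [MvPolynomial.totalDegree_C, MvPolynomial.totalDegree_X_pow]
        omega
      rw [MvPolynomial.totalDegree_X]
      omega
    · rw [MvPolynomial.totalDegree_neg, hhV]
      refine le_trans (MvPolynomial.totalDegree_finset_sum _ _) (Finset.sup_le fun m hm => ?_)
      refine le_trans (MvPolynomial.totalDegree_mul _ _) ?_
      rw [MvPolynomial.totalDegree_C, MvPolynomial.totalDegree_X_pow]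
      simp only [Finset.mem_range] at hm
      omega
  have hcond : ¬ ∀ i < N, s i = 0 := by
    obtain ⟨i, hi, hsi⟩ := hGex
    exact fun hcc => hsi (hcc i hi)
  unfold expComplexityN
  rw [if_neg hcond]
  exact le_trans (Nat.sInf_le ⟨h, hne, rfl, hdvd⟩) (le_trans hdeg (by omega))
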